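/- Let N be a positive integer and t_min < t_max. If two convex combinations of points on the moment curve C_N over [t_min, t_max], each using at most (N+1)/2 points when N is odd (or at most (N+2)/2 points with first point at t_min when N is even) and listed in weakly increasing parameter order, evaluate to the same point of ℝ^N, then one can be transformed into the other by a finite sequence of the following moves: adding or removing a term with coefficient zero, and merging two terms with equal parameter into one (or splitting one term into two with the same parameter and coefficients summing to the original). -/

import Mathlib

/-- A naming, presented as a list of (coefficient, parameter) pairs: nonnegative
coefficients summing to one, parameters weakly increasing within `[t_min, t_max]`. -/
def IsNamingList (tmin tmax : ℝ) (L : List (ℝ × ℝ)) : Prop :=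
  (∀ p ∈ L, 0 ≤ p.1 ∧ p.2 ∈ Set.Icc tmin tmax) ∧
  (L.map Prod.fst).sum = 1 ∧ List.Chain' (fun a b : ℝ × ℝ => a.2 ≤ b.2) L

/-- `L'` is obtained from `L` by inserting a term with coefficient zero. -/
def ZeroAdd (L L' : List (ℝ × ℝ)) : Prop :=
  ∃ l1 l2 t, L = l1 ++ l2 ∧ L' = l1 ++ (0, t) :: l2

/-- `L'` is obtained from `L` by splitting one term into two terms with the same
parameter whose coefficients sum to the original coefficient. -/
def EqualSplit (L L' : List (ℝ × ℝ)) : Prop :=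
  ∃ l1 l2 c1 c2 t, L = l1 ++ (c1 + c2, t) :: l2 ∧ L' = l1 ++ (c1, t) :: (c2, t) :: l2

/-- A single move between namings: a zero-addition, an equal-split, or the inverse
of one of these, both endpoints being namings. -/
def NamingStep (tmin tmax : ℝ) (L L' : List (ℝ × ℝ)) : Prop :=
  IsNamingList tmin tmax L ∧ IsNamingList tmin tmax L' ∧
  (ZeroAdd L L' ∨ EqualSplit L L' ∨ ZeroAdd L' L ∨ EqualSplit L' L)

/-- Equivalence of namings: a finite chain of moves. -/
def NamingEquiv (tmin tmax : ℝ) : List (ℝ × ℝ) → List (ℝ × ℝ) → Prop :=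
  Relation.ReflTransGen (NamingStep tmin tmax)

/-- Evaluation of a naming as a convex combination of points on the moment curve. -/
def evalNamingList (N : ℕ) (L : List (ℝ × ℝ)) : Fin N → ℝ :=
  fun i => (L.map fun p => p.1 * p.2 ^ ((i : ℕ) + 1)).sum

noncomputable def muL (L : List (ℝ × ℝ)) (t : ℝ) : ℝ :=
  (L.map fun p => if p.2 = t then p.1 else 0).sum

@[simp] lemma muL_nil (t : ℝ) : muL [] t = 0 := rfl

@[simp] lemma muL_cons (p : ℝ × ℝ) (L : List (ℝ × ℝ)) (t : ℝ) :
    muL (p :: L) t = (if p.2 = t then p.1 else 0) + muL L t := by simp [muL]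

@[simp] lemma muL_append (L M : List (ℝ × ℝ)) (t : ℝ) :
    muL (L ++ M) t = muL L t + muL M t := by simp [muL]

lemma muL_eq_zero_of_not_mem {L : List (ℝ × ℝ)} {t : ℝ} (h : t ∉ L.map Prod.snd) :
    muL L t = 0 := by
  induction L with
  | nil => rfl
  | cons p L ih =>
    simp only [List.map_cons, List.mem_cons, not_or] at h
    rw [muL_cons, if_neg (fun he => h.1 he.symm), ih h.2, add_zero]

instance : IsTrans (ℝ × ℝ) (fun a b : ℝ × ℝ => a.2 < b.2) :=
  ⟨fun _ _ _ h1 h2 => lt_trans h1 h2⟩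

/-- positive coefficients and strictly increasing parameters -/
def PosStrict (L : List (ℝ × ℝ)) : Prop :=
  (∀ p ∈ L, 0 < p.1) ∧ List.Chain' (fun a b : ℝ × ℝ => a.2 < b.2) L

lemma notMem_of_strict {p : ℝ × ℝ} {r : List (ℝ × ℝ)}
    (h : List.Chain' (fun a b : ℝ × ℝ => a.2 < b.2) (p :: r)) : p.2 ∉ r.map Prod.snd := by
  intro hmem
  obtain ⟨q, hq, hq2⟩ := List.mem_map.mp hmem
  have := List.isChain_iff_pairwise.mp h
  have := (List.pairwise_cons.mp this).1 q hq
  rw [hq2] at this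
  exact lt_irrefl _ this

lemma muL_head {p : ℝ × ℝ} {r : List (ℝ × ℝ)}
    (h : List.Chain' (fun a b : ℝ × ℝ => a.2 < b.2) (p :: r)) : muL (p :: r) p.2 = p.1 := by
  rw [muL_cons, if_pos rfl, muL_eq_zero_of_not_mem (notMem_of_strict h), add_zero]

lemma posStrict_unique : ∀ (L1 L2 : List (ℝ × ℝ)), PosStrict L1 → PosStrict L2 →
    muL L1 = muL L2 → L1 = L2 := by
  intro L1
  induction L1 with
  | nil =>
    intro L2 _ h2 hmu
    cases L2 with
    | nil => rfl
    | cons q r2 =>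
      exfalso
      have : muL (q :: r2) q.2 = q.1 := muL_head h2.2
      have h0 : (0:ℝ) = q.1 := by rw [← this, ← hmu, muL_nil]
      linarith [h2.1 q (by simp : q ∈ q :: r2)]
  | cons p r1 ih =>
    intro L2 h1 h2 hmu
    cases L2 with
    | nil =>
      exfalso
      have : muL (p :: r1) p.2 = p.1 := muL_head h1.2
      have h0 : p.1 = (0:ℝ) := by rw [← this, hmu, muL_nil]
      linarith [h1.1 p (by simp : p ∈ p :: r1)]
    | cons q r2 =>
      have hp1 : muL (p :: r1) p.2 = p.1 := muL_head h1.2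
      have hq2 : muL (q :: r2) q.2 = q.1 := muL_head h2.2
      have hppos := h1.1 p (by simp)
      have hqpos := h2.1 q (by simp)
      -- p.2 ∈ params of q :: r2
      have hpmem : p.2 ∈ (q :: r2).map Prod.snd := by
        by_contra hc
        have : muL (q :: r2) p.2 = 0 := muL_eq_zero_of_not_mem hc
        rw [← hmu, hp1] at this
        linarith
      have hqmem : q.2 ∈ (p :: r1).map Prod.snd := by
        by_contra hc
        have : muL (p :: r1) q.2 = 0 := muL_eq_zero_of_not_mem hc
        rw [hmu, hq2] at this
        linarith
      have hle1 : q.2 ≤ p.2 := by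
        rcases List.mem_cons.mp hpmem with h | h
        · exact le_of_eq h.symm
        · obtain ⟨x, hx, hx2⟩ := List.mem_map.mp h
          have := (List.pairwise_cons.mp (List.isChain_iff_pairwise.mp h2.2)).1 x hx
          exact le_of_lt (hx2 ▸ this)
      have hle2 : p.2 ≤ q.2 := by
        rcases List.mem_cons.mp hqmem with h | h
        · exact le_of_eq h.symm
        · obtain ⟨x, hx, hx2⟩ := List.mem_map.mp h
          have := (List.pairwise_cons.mp (List.isChain_iff_pairwise.mp h1.2)).1 x hx
          exact le_of_lt (hx2 ▸ this)
      have ht : p.2 = q.2 := le_antisymm hle2 hle1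
      have hc : p.1 = q.1 := by rw [← hp1, hmu, ht, hq2]
      have htails : muL r1 = muL r2 := by
        funext s
        by_cases hs : s = p.2
        · subst hs
          rw [muL_eq_zero_of_not_mem (notMem_of_strict h1.2),
            muL_eq_zero_of_not_mem (ht ▸ notMem_of_strict h2.2)]
        · have := congrFun hmu s
          rw [muL_cons, muL_cons, if_neg (fun he => hs he.symm),
            if_neg (fun he => hs (by rw [← he, ht])), zero_add, zero_add] at this
          exact this
      have := ih r2 ⟨fun x hx => h1.1 x (by simp [hx]), h1.2.tail⟩
        ⟨fun x hx => h2.1 x (by simp [hx]), h2.2.tail⟩ htails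
      rw [this, Prod.ext_iff.mpr ⟨hc, ht⟩]

lemma reduce_or_normal : ∀ (L : List (ℝ × ℝ)),
    List.Chain' (fun a b : ℝ × ℝ => a.2 ≤ b.2) L → (∀ p ∈ L, 0 ≤ p.1) →
    PosStrict L ∨ (∃ l1 l2 t, L = l1 ++ ((0:ℝ), t) :: l2) ∨
      (∃ l1 l2 c1 c2 t, L = l1 ++ (c1, t) :: (c2, t) :: l2) := by
  intro L
  induction L with
  | nil => intro _ _; exact Or.inl ⟨by simp, List.isChain_nil⟩
  | cons p r ih =>
    intro hch hnn
    by_cases hp : p.1 = 0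
    · refine Or.inr (Or.inl ⟨[], r, p.2, ?_⟩)
      have : p = ((0:ℝ), p.2) := Prod.ext hp rfl
      rw [← this]; rfl
    · rcases ih hch.tail (fun x hx => hnn x (by simp [hx])) with hps | hred | hred
      · cases r with
        | nil =>
          refine Or.inl ⟨fun x hx => ?_, List.isChain_singleton p⟩
          simp only [List.mem_singleton] at hx
          subst hx
          exact lt_of_le_of_ne (hnn x (by simp)) (Ne.symm hp)
        | cons q r' =>
          have hpq : p.2 ≤ q.2 := (List.isChain_cons_cons.mp hch).1
          by_cases heq : p.2 = q.2
          · refine Or.inr (Or.inr ⟨[], r', p.1, q.1, p.2, ?_⟩)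
            have hpe : p = (p.1, p.2) := rfl
            have hqe : q = (q.1, p.2) := Prod.ext rfl heq.symm
            rw [List.nil_append, ← hpe, ← hqe]
          · refine Or.inl ⟨fun x hx => ?_, List.isChain_cons_cons.mpr ⟨lt_of_le_of_ne hpq heq, hps.2⟩⟩
            rcases List.mem_cons.mp hx with h | h
            · subst h; exact lt_of_le_of_ne (hnn x (by simp)) (Ne.symm hp)
            · exact hps.1 x h
      · obtain ⟨l1, l2, t, hL⟩ := hred
        exact Or.inr (Or.inl ⟨p :: l1, l2, t, by rw [hL]; rfl⟩)
      · obtain ⟨l1, l2, c1, c2, t, hL⟩ := hred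
        exact Or.inr (Or.inr ⟨p :: l1, l2, c1, c2, t, by rw [hL]; rfl⟩)

instance : IsTrans (ℝ × ℝ) (fun a b : ℝ × ℝ => a.2 ≤ b.2) :=
  ⟨fun _ _ _ h1 h2 => le_trans h1 h2⟩

lemma muL_zero_add (l1 l2 : List (ℝ × ℝ)) (t : ℝ) :
    muL (l1 ++ (0, t) :: l2) = muL (l1 ++ l2) := by
  funext s
  simp [muL_append]

lemma muL_merge (l1 l2 : List (ℝ × ℝ)) (c1 c2 t : ℝ) :
    muL (l1 ++ (c1 + c2, t) :: l2) = muL (l1 ++ (c1, t) :: (c2, t) :: l2) := by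
  funext s
  simp only [muL_append, muL_cons]
  split <;> ring

lemma naming_zero_remove {tmin tmax : ℝ} {l1 l2 : List (ℝ × ℝ)} {t : ℝ}
    (h : IsNamingList tmin tmax (l1 ++ (0, t) :: l2)) : IsNamingList tmin tmax (l1 ++ l2) := by
  obtain ⟨hmem, hsum, hch⟩ := h
  refine ⟨fun p hp => hmem p ?_, ?_, ?_⟩
  · rcases List.mem_append.mp hp with h | h
    · exact List.mem_append.mpr (Or.inl h)
    · exact List.mem_append.mpr (Or.inr (List.mem_cons_of_mem _ h))
  · simp only [List.map_append, List.sum_append, List.map_cons, List.sum_cons] at hsum ⊢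
    linarith
  · exact hch.sublist ((l2.sublist_cons_self ((0:ℝ), t)).append_left l1)

lemma naming_merge {tmin tmax : ℝ} {l1 l2 : List (ℝ × ℝ)} {c1 c2 t : ℝ}
    (h : IsNamingList tmin tmax (l1 ++ (c1, t) :: (c2, t) :: l2)) :
    IsNamingList tmin tmax (l1 ++ (c1 + c2, t) :: l2) := by
  obtain ⟨hmem, hsum, hch⟩ := h
  have h1 := hmem (c1, t) (by simp)
  have h2 := hmem (c2, t) (by simp)
  refine ⟨fun p hp => ?_, ?_, ?_⟩
  · rcases List.mem_append.mp hp with h | h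
    · exact hmem p (List.mem_append.mpr (Or.inl h))
    · rcases List.mem_cons.mp h with h | h
      · subst h
        exact ⟨add_nonneg h1.1 h2.1, h1.2⟩
      · exact hmem p (by simp [h])
  · simp only [List.map_append, List.sum_append, List.map_cons, List.sum_cons] at hsum ⊢
    linarith
  · have hch' : List.Chain' (· ≤ ·) ((l1 ++ (c1, t) :: (c2, t) :: l2).map Prod.snd) :=
      (List.isChain_map Prod.snd).mpr hch
    have hsub : List.Sublist ((l1 ++ (c1 + c2, t) :: l2).map Prod.snd)
        ((l1 ++ (c1, t) :: (c2, t) :: l2).map Prod.snd) := by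
      simp only [List.map_append, List.map_cons]
      exact ((List.map Prod.snd l2).sublist_cons_self t).cons₂ t |>.append_left _
    exact (List.isChain_map Prod.snd).mp (hch'.sublist hsub)

lemma toNormal (tmin tmax : ℝ) : ∀ n : ℕ, ∀ L : List (ℝ × ℝ), L.length ≤ n →
    IsNamingList tmin tmax L →
    ∃ M, NamingEquiv tmin tmax L M ∧ PosStrict M ∧ muL M = muL L := by
  intro n
  induction n with
  | zero =>
    intro L hlen hL
    rw [List.length_eq_zero_iff.mp (Nat.le_zero.mp hlen)] at hL
    exact absurd hL.2.1 (by simp)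
  | succ n ih =>
    intro L hlen hL
    rcases reduce_or_normal L hL.2.2 (fun p hp => (hL.1 p hp).1) with hps | ⟨l1, l2, t, rfl⟩ |
      ⟨l1, l2, c1, c2, t, rfl⟩
    · exact ⟨L, Relation.ReflTransGen.refl, hps, rfl⟩
    · have hL' : IsNamingList tmin tmax (l1 ++ l2) := naming_zero_remove hL
      have hlen' : (l1 ++ l2).length ≤ n := by
        simp only [List.length_append, List.length_cons] at hlen ⊢
        omega
      obtain ⟨M, hequiv, hps, hmu⟩ := ih (l1 ++ l2) hlen' hL'
      refine ⟨M, Relation.ReflTransGen.head ⟨hL, hL', Or.inr (Or.inr (Or.inl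
        ⟨l1, l2, t, rfl, rfl⟩))⟩ hequiv, hps, ?_⟩
      rw [hmu, muL_zero_add]
    · have hL' : IsNamingList tmin tmax (l1 ++ (c1 + c2, t) :: l2) := naming_merge hL
      have hlen' : (l1 ++ (c1 + c2, t) :: l2).length ≤ n := by
        simp only [List.length_append, List.length_cons] at hlen ⊢
        omega
      obtain ⟨M, hequiv, hps, hmu⟩ := ih _ hlen' hL'
      refine ⟨M, Relation.ReflTransGen.head ⟨hL, hL', Or.inr (Or.inr (Or.inr
        ⟨l1, l2, c1, c2, t, rfl, rfl⟩))⟩ hequiv, hps, ?_⟩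
      rw [hmu, muL_merge]

lemma namingEquiv_symm {tmin tmax : ℝ} {L L' : List (ℝ × ℝ)}
    (h : NamingEquiv tmin tmax L L') : NamingEquiv tmin tmax L' L := by
  have hsym : Symmetric (NamingStep tmin tmax) := fun a b ⟨h1, h2, h3⟩ => ⟨h2, h1, by tauto⟩
  haveI : Std.Symm (NamingStep tmin tmax) := ⟨fun a b h => hsym h⟩
  exact Std.Symm.symm (r := Relation.ReflTransGen (NamingStep tmin tmax)) _ _ h

lemma sum_moment_eq (L : List (ℝ × ℝ)) (S : Finset ℝ) (hS : ∀ t ∈ L.map Prod.snd, t ∈ S)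
    (d : ℕ) : (L.map fun p => p.1 * p.2 ^ d).sum = ∑ t ∈ S, muL L t * t ^ d := by
  induction L with
  | nil => simp
  | cons p L ih =>
    have hmem : p.2 ∈ S := hS p.2 (by simp)
    have hrest : ∀ t ∈ L.map Prod.snd, t ∈ S := fun t ht => hS t (by simp [ht])
    rw [List.map_cons, List.sum_cons, ih hrest]
    simp only [muL_cons, add_mul, Finset.sum_add_distrib]
    congr 1
    rw [Finset.sum_congr rfl (fun t _ => show (if p.2 = t then p.1 else 0) * t ^ d
      = if p.2 = t then p.1 * t ^ d else 0 by split <;> simp),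
      Finset.sum_ite_eq S p.2 (fun t => p.1 * t ^ d), if_pos hmem]

/-- Vandermonde-type vanishing -/
lemma vanish_of_moments (N : ℕ) (S : Finset ℝ) (f : ℝ → ℝ) (hcard : S.card ≤ N + 1)
    (hmom : ∀ d ≤ N, ∑ t ∈ S, f t * t ^ d = 0) : ∀ t ∈ S, f t = 0 := by
  -- for any polynomial P of natDegree ≤ N, ∑ t ∈ S, f t * P.eval t = 0
  have key : ∀ P : Polynomial ℝ, P.natDegree ≤ N → ∑ t ∈ S, f t * P.eval t = 0 := by
    intro P hP
    have : ∀ t : ℝ, P.eval t = ∑ d ∈ P.support, P.coeff d * t ^ d := fun t => by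
      rw [Polynomial.eval_eq_sum, Polynomial.sum_def]
    simp_rw [this, Finset.mul_sum, Finset.sum_comm (s := S)]
    apply Finset.sum_eq_zero
    intro d hd
    have hdN : d ≤ N := le_trans (Polynomial.le_natDegree_of_mem_supp d hd) hP
    calc ∑ t ∈ S, f t * (P.coeff d * t ^ d)
        = P.coeff d * ∑ t ∈ S, f t * t ^ d := by
          rw [Finset.mul_sum]; apply Finset.sum_congr rfl; intro t _; ring
      _ = 0 := by rw [hmom d hdN, mul_zero]
  intro t ht
  have hinj : Set.InjOn (id : ℝ → ℝ) S := Function.injective_id.injOn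
  have hbasis := key (Lagrange.basis S id t) ?deg
  · rw [Finset.sum_eq_single t] at hbasis
    · have := Lagrange.eval_basis_self hinj ht
      simp only [id_eq] at this
      rwa [this, mul_one] at hbasis
    · intro s hs hst
      have := Lagrange.eval_basis_of_ne (v := (id : ℝ → ℝ)) (Ne.symm hst) hs
      simp only [id_eq] at this
      rw [this, mul_zero]
    · intro hts; exact absurd ht hts
  case deg =>
    rw [Lagrange.natDegree_basis hinj ht]
    omega


/-- Two namings with at most `(N+1)/2` terms (`N` odd), or at most `(N+2)/2` terms
and first parameter `t_min` (`N` even), that evaluate to the same point of `ℝ^N`,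
are connected by a finite chain of zero-additions, equal-splits and their
inverses. -/
theorem equal_eval_namings_equivalent (N : ℕ) (hN : 0 < N) (tmin tmax : ℝ)
    (h : tmin < tmax) (L1 L2 : List (ℝ × ℝ))
    (h1 : IsNamingList tmin tmax L1) (h2 : IsNamingList tmin tmax L2)
    (hodd : Odd N → L1.length ≤ (N + 1) / 2 ∧ L2.length ≤ (N + 1) / 2)
    (heven : Even N → L1.length ≤ (N + 2) / 2 ∧ L2.length ≤ (N + 2) / 2 ∧
      (L1.map Prod.snd).head? = some tmin ∧ (L2.map Prod.snd).head? = some tmin)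
    (heq : evalNamingList N L1 = evalNamingList N L2) :
    NamingEquiv tmin tmax L1 L2 := by
  set S : Finset ℝ := (L1.map Prod.snd).toFinset ∪ (L2.map Prod.snd).toFinset with hS
  set f : ℝ → ℝ := fun t => muL L1 t - muL L2 t with hf
  have hmemS1 : ∀ t ∈ L1.map Prod.snd, t ∈ S := fun t ht =>
    Finset.mem_union_left _ (List.mem_toFinset.mpr ht)
  have hmemS2 : ∀ t ∈ L2.map Prod.snd, t ∈ S := fun t ht =>
    Finset.mem_union_right _ (List.mem_toFinset.mpr ht)
  -- moment conditions
  have hmom : ∀ d ≤ N, ∑ t ∈ S, f t * t ^ d = 0 := by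
    intro d hd
    have e1 := sum_moment_eq L1 S hmemS1 d
    have e2 := sum_moment_eq L2 S hmemS2 d
    have hsums : (L1.map fun p => p.1 * p.2 ^ d).sum = (L2.map fun p => p.1 * p.2 ^ d).sum := by
      cases d with
      | zero =>
        simp only [pow_zero, mul_one]
        rw [h1.2.1, h2.2.1]
      | succ d' =>
        have hd' : d' < N := by omega
        have := congrFun heq ⟨d', hd'⟩
        simpa [evalNamingList] using this
    simp only [hf, sub_mul, Finset.sum_sub_distrib, ← e1, ← e2, hsums, sub_self]
  -- cardinality
  have hcard : S.card ≤ N + 1 := by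
    rcases Nat.even_or_odd N with he | ho
    · obtain ⟨hl1, hl2, hh1, hh2⟩ := heven he
      have htm1 : tmin ∈ (L1.map Prod.snd).toFinset := by
        cases hL : L1 with
        | nil => rw [hL] at hh1; simp at hh1
        | cons p r =>
          rw [hL] at hh1
          simp only [List.map_cons, List.head?_cons, Option.some.injEq] at hh1
          simp [← hh1]
      have htm2 : tmin ∈ (L2.map Prod.snd).toFinset := by
        cases hL : L2 with
        | nil => rw [hL] at hh2; simp at hh2
        | cons p r =>
          rw [hL] at hh2
          simp only [List.map_cons, List.head?_cons, Option.some.injEq] at hh2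
          simp [← hh2]
      have hsub : S ⊆ (L1.map Prod.snd).toFinset ∪ ((L2.map Prod.snd).toFinset.erase tmin) := by
        intro x hx
        rcases Finset.mem_union.mp hx with hx | hx
        · exact Finset.mem_union_left _ hx
        · by_cases hxt : x = tmin
          · exact Finset.mem_union_left _ (hxt ▸ htm1)
          · exact Finset.mem_union_right _ (Finset.mem_erase.mpr ⟨hxt, hx⟩)
      have hc1 := (L1.map Prod.snd).toFinset_card_le
      have hc2 := (L2.map Prod.snd).toFinset_card_le
      have hpos2 : 1 ≤ (L2.map Prod.snd).toFinset.card := Finset.card_pos.mpr ⟨tmin, htm2⟩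
      have key : S.card ≤ (L1.map Prod.snd).toFinset.card +
          ((L2.map Prod.snd).toFinset.card - 1) := by
        refine le_trans (Finset.card_le_card hsub) (le_trans (Finset.card_union_le _ _) ?_)
        rw [Finset.card_erase_of_mem htm2]
      have hSe : S.card =
          ((L1.map Prod.snd).toFinset ∪ (L2.map Prod.snd).toFinset).card := by rw [hS]
      simp only [List.length_map] at hc1 hc2
      obtain ⟨k, hk⟩ := he
      omega
    · obtain ⟨hl1, hl2⟩ := hodd ho
      have hc1 := (L1.map Prod.snd).toFinset_card_le
      have hc2 := (L2.map Prod.snd).toFinset_card_le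
      have := Finset.card_union_le (L1.map Prod.snd).toFinset (L2.map Prod.snd).toFinset
      have hSe : S.card =
          ((L1.map Prod.snd).toFinset ∪ (L2.map Prod.snd).toFinset).card := by rw [hS]
      simp only [List.length_map] at hc1 hc2
      obtain ⟨k, hk⟩ := ho
      omega
  have hv := vanish_of_moments N S f hcard hmom
  have hmueq : muL L1 = muL L2 := by
    funext t
    by_cases ht : t ∈ S
    · have := hv t ht
      simp only [hf] at this
      linarith
    · rw [muL_eq_zero_of_not_mem (fun hm => ht (hmemS1 t hm)),
        muL_eq_zero_of_not_mem (fun hm => ht (hmemS2 t hm))]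
  obtain ⟨M1, he1, hps1, hmu1⟩ := toNormal tmin tmax L1.length L1 le_rfl h1
  obtain ⟨M2, he2, hps2, hmu2⟩ := toNormal tmin tmax L2.length L2 le_rfl h2
  have hM : M1 = M2 := posStrict_unique M1 M2 hps1 hps2 (by rw [hmu1, hmu2, hmueq])
  exact he1.trans (hM ▸ namingEquiv_symm he2)
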